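/- Let f : (0,∞) → ℝ be positive and smooth with f(0)=0, f'(0)=1, satisfying f'' + G f = 0 for a non-increasing function G, and suppose f'(ρ) = 0 with G(ρ) ≠ 0 for a unique ρ ∈ (0,∞). Then f'(t) < 0 for all t > ρ. -/

import Mathlib

/-- If `f > 0` on `(0,∞)` solves `f'' + G f = 0` with `f(0) = 0`, `f'(0) = 1` for a
non-increasing curvature function `G`, and `ρ ∈ (0,∞)` is the unique critical point of
`f` with `f'(ρ) = 0` and `G(ρ) ≠ 0`, then `f'(t) < 0` for all `t > ρ`. -/
theorem stmt8 (G f f' : ℝ → ℝ)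
    (hG : AntitoneOn G (Set.Ici 0))
    (hf : ∀ t, HasDerivAt f (f' t) t)
    (hf2 : ∀ t, HasDerivAt f' (-(G t * f t)) t)
    (hfpos : ∀ t > (0 : ℝ), 0 < f t)
    (hf0 : f 0 = 0) (hf'0 : f' 0 = 1)
    (ρ : ℝ) (hρ : 0 < ρ) (hcrit : f' ρ = 0) (hGρ : G ρ ≠ 0)
    (huniq : ∀ t > (0 : ℝ), f' t = 0 → t = ρ) :
    ∀ t > ρ, f' t < 0 := by
  have hcont : Continuous f' := continuous_iff_continuousAt.2 fun t => (hf2 t).continuousAt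
  have hslope : Filter.Tendsto (slope f' ρ) (nhdsWithin ρ {ρ}ᶜ) (nhds (-(G ρ * f ρ))) :=
    hasDerivAt_iff_tendsto_slope.mp (hf2 ρ)
  have hfρ : 0 < f ρ := hfpos ρ hρ
  -- Step 1: G ρ > 0
  have hGpos : 0 < G ρ := by
    rcases lt_or_gt_of_ne hGρ with hneg | hpos
    · exfalso
      have hd : 0 < -(G ρ * f ρ) := by nlinarith
      have h1 : ∀ᶠ x in nhdsWithin ρ {ρ}ᶜ, 0 < slope f' ρ x :=
        hslope.eventually (Filter.Tendsto.eventually_const_lt hd Filter.tendsto_id) |>.mono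
          (fun x hx => hx)
      have hle : nhdsWithin ρ (Set.Iio ρ) ≤ nhdsWithin ρ {ρ}ᶜ :=
        nhdsWithin_mono ρ (fun x hx => ne_of_lt hx)
      have h2 : ∀ᶠ x in nhdsWithin ρ (Set.Iio ρ), 0 < slope f' ρ x := h1.filter_mono hle
      have h3 : Set.Ioo (0 : ℝ) ρ ∈ nhdsWithin ρ (Set.Iio ρ) :=
        Ioo_mem_nhdsLT_of_mem ⟨hρ, le_refl ρ⟩
      obtain ⟨x, hx1, hx2⟩ := (h2.and (Filter.eventually_of_mem h3 fun x hx => hx)).exists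
      -- f' x < 0 since slope > 0 and x < ρ
      have hfx : f' x < 0 := by
        have hsl : slope f' ρ x = (f' x - f' ρ) / (x - ρ) := by
          simp [slope, vsub_eq_sub]; ring
        rw [hsl, hcrit, sub_zero] at hx1
        have hxρ : x - ρ < 0 := sub_neg.mpr hx2.2
        rcases div_pos_iff.mp hx1 with ⟨_, h⟩ | ⟨h, _⟩
        · linarith
        · exact h
      -- IVT on [0, x]
      have hivt := intermediate_value_Ioo' (le_of_lt hx2.1) hcont.continuousOn
        (a := (0:ℝ)) (b := x)
      have h0 : (0:ℝ) ∈ Set.Ioo (f' x) (f' 0) := by rw [hf'0]; exact ⟨hfx, one_pos⟩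
      obtain ⟨c, hc, hfc⟩ := hivt h0
      have := huniq c hc.1 hfc
      linarith [hc.2, hx2.2]
    · exact hpos
  -- Step 2: f' < 0 just after ρ
  have hd : -(G ρ * f ρ) < 0 := by nlinarith
  have h1 : ∀ᶠ x in nhdsWithin ρ {ρ}ᶜ, slope f' ρ x < 0 :=
    hslope.eventually (Filter.Tendsto.eventually_lt_const hd Filter.tendsto_id)
  have hle : nhdsWithin ρ (Set.Ioi ρ) ≤ nhdsWithin ρ {ρ}ᶜ :=
    nhdsWithin_mono ρ (fun x hx => ne_of_gt hx)
  have h2 : ∀ᶠ x in nhdsWithin ρ (Set.Ioi ρ), slope f' ρ x < 0 := h1.filter_mono hle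
  intro t ht
  by_contra hge
  push_neg at hge
  have hft : 0 < f' t := by
    rcases lt_or_eq_of_le hge with h | h
    · exact h
    · exact absurd (huniq t (lt_trans hρ ht) h.symm) (ne_of_gt ht)
  have h3 : Set.Ioo ρ t ∈ nhdsWithin ρ (Set.Ioi ρ) :=
    Ioo_mem_nhdsGT_of_mem ⟨le_refl ρ, ht⟩
  obtain ⟨s, hs1, hs2⟩ := (h2.and (Filter.eventually_of_mem h3 fun x hx => hx)).exists
  have hfs : f' s < 0 := by
    have hsl : slope f' ρ s = (f' s - f' ρ) / (s - ρ) := by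
      simp [slope, vsub_eq_sub]; ring
    rw [hsl, hcrit, sub_zero] at hs1
    have hsρ : 0 < s - ρ := sub_pos.mpr hs2.1
    rcases div_neg_iff.mp hs1 with ⟨_, h⟩ | ⟨h, _⟩
    · linarith
    · exact h
  -- IVT on [s, t]
  have hivt := intermediate_value_Ioo (le_of_lt hs2.2) hcont.continuousOn
    (a := s) (b := t)
  obtain ⟨c, hc, hfc⟩ := hivt ⟨hfs, hft⟩
  have := huniq c (lt_trans hρ (lt_trans hs2.1 hc.1)) hfc
  linarith [hc.1, hs2.1]
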